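/- Let 𝔚₁, 𝔚₂ be compound BCCs with D(𝔚₁,𝔚₂) ≤ ε for ε ∈ (0,1). Fix n ∈ ℕ and random variables U—V—Xⁿ. Let A₁(i) := (1/n)( min_{s∈Sᵢ} I(V;Yⁿ_s|U) − max_{s∈Sᵢ} I(V;Zⁿ_s|U) ) for i = 1,2. Then |A₁(1) − A₁(2)| ≤ 4ε·log(|𝒴||𝒵|) + 8H₂(ε). -/

import Mathlib

open Finset Real

noncomputable def H2 (e : ℝ) : ℝ := -(e * Real.logb 2 e) - (1 - e) * Real.logb 2 (1 - e)

def IsPMF {α : Type*} [Fintype α] (p : α → ℝ) : Prop :=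
  (∀ a, 0 ≤ p a) ∧ ∑ a, p a = 1

noncomputable def ent {α : Type*} [Fintype α] (p : α → ℝ) : ℝ :=
  -∑ a, p a * Real.logb 2 (p a)

/-- Mutual information `I(A ; B)` for a joint distribution on `α × β`. -/
noncomputable def MI {α β : Type*} [Fintype α] [Fintype β] (p : α × β → ℝ) : ℝ :=
  ent (fun a => ∑ b, p (a, b)) + ent (fun b => ∑ a, p (a, b)) - ent p

/-- Conditional mutual information `I(B ; C | A)` for a joint distribution on `α × β × γ`. -/
noncomputable def condMI {α β γ : Type*} [Fintype α] [Fintype β] [Fintype γ]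
    (p : α × β × γ → ℝ) : ℝ :=
  ent (fun x : α × β => ∑ c, p (x.1, x.2, c)) + ent (fun x : α × γ => ∑ b, p (x.1, b, x.2))
    - ent p - ent (fun a => ∑ b, ∑ c, p (a, b, c))

/-- Joint distribution of `(U, Yⁿ)` when `Xⁿ` is generated via `U — V — Xⁿ`
and sent through the memoryless extension of the channel `Ch`. -/
noncomputable def PUOut {U V X Y : Type*} [Fintype V] [Fintype X]
    (n : ℕ) (Ch : X → Y → ℝ) (PU : U → ℝ) (PVU : U → V → ℝ)
    (E : V → (Fin n → X) → ℝ) : U × (Fin n → Y) → ℝ :=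
  fun t => ∑ v, ∑ x : Fin n → X, (∏ i : Fin n, Ch (x i) (t.2 i)) * E v x * PVU t.1 v * PU t.1

/-- Joint distribution of `(U, V, Yⁿ)` when `Xⁿ` is generated via `U — V — Xⁿ`
and sent through the memoryless extension of the channel `Ch`. -/
noncomputable def PUVOut {U V X Y : Type*} [Fintype X]
    (n : ℕ) (Ch : X → Y → ℝ) (PU : U → ℝ) (PVU : U → V → ℝ)
    (E : V → (Fin n → X) → ℝ) : U × V × (Fin n → Y) → ℝ :=
  fun t => ∑ x : Fin n → X, (∏ i : Fin n, Ch (x i) (t.2.2 i)) * E t.2.1 x * PVU t.1 t.2.1 * PU t.1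

namespace BCC


/-- subadditivity of negMulLog -/
lemma nML_add_le {x v : ℝ} (hx : 0 ≤ x) (hv : 0 ≤ v) :
    Real.negMulLog (x + v) ≤ Real.negMulLog x + Real.negMulLog v := by
  rcases eq_or_lt_of_le hx with h | hx
  · simp [← h]
  rcases eq_or_lt_of_le hv with h | hv
  · simp [← h]
  have h1 : Real.log x ≤ Real.log (x + v) := Real.log_le_log hx (by linarith)
  have h2 : Real.log v ≤ Real.log (x + v) := Real.log_le_log hv (by linarith)
  simp only [Real.negMulLog, neg_mul]
  nlinarith

/-- `-log(1-v) ≤ 2 log 2 * v` for `v ∈ [0, 1/2]`. -/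
lemma neg_log_one_sub_le {v : ℝ} (hv0 : 0 ≤ v) (hv : v ≤ 1/2) :
    -Real.log (1 - v) ≤ 2 * Real.log 2 * v := by
  have hconv := convexOn_exp.2 (Set.mem_univ (0:ℝ)) (Set.mem_univ (-Real.log 2))
    (show (0:ℝ) ≤ 1 - 2*v by linarith) (show (0:ℝ) ≤ 2*v by linarith) (by ring)
  simp only [smul_eq_mul, mul_zero, zero_add, Real.exp_zero, mul_one] at hconv
  have hexp : Real.exp (-Real.log 2) = 1/2 := by
    rw [Real.exp_neg, Real.exp_log (by norm_num)]; norm_num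
  rw [hexp] at hconv
  have hle : Real.exp (2*v * -Real.log 2) ≤ 1 - v := by
    calc Real.exp (2*v * -Real.log 2) ≤ (1 - 2*v) + 2*v * (1/2) := by
          convert hconv using 2 <;> ring
    _ = 1 - v := by ring
  have := Real.log_le_log (Real.exp_pos _) hle
  rw [Real.log_exp] at this
  nlinarith

/-- `2 log 2 * (1 - v) ≤ -log v` for `v ∈ (0, 1/2]`. -/
lemma two_log_two_le_neg_log {v : ℝ} (hv0 : 0 < v) (hv : v ≤ 1/2) :
    2 * Real.log 2 * (1 - v) ≤ -Real.log v := by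
  have h1 : Real.log (2*v) ≤ 2*v - 1 := Real.log_le_sub_one_of_pos (by linarith)
  rw [Real.log_mul (by norm_num) (ne_of_gt hv0)] at h1
  have hlog2 : Real.log 2 < 1 := by
    have := Real.log_two_lt_d9; linarith
  nlinarith

/-- `negMulLog (1 - v) ≤ negMulLog v` for `v ∈ [0, 1/2]`. -/
lemma nML_one_sub_le {v : ℝ} (hv0 : 0 ≤ v) (hv : v ≤ 1/2) :
    Real.negMulLog (1 - v) ≤ Real.negMulLog v := by
  rcases eq_or_lt_of_le hv0 with h | hv0
  · simp [← h]
  have h1 := neg_log_one_sub_le hv0.le hv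
  have h2 := two_log_two_le_neg_log hv0 hv
  simp only [Real.negMulLog, neg_mul]
  nlinarith

/-- The hard direction of the Fannes-type pointwise bound. -/
lemma nML_sub_le {x v : ℝ} (hx : 0 ≤ x) (hv : 0 ≤ v) (hv2 : v ≤ 1/2) (hxv : x + v ≤ 1) :
    Real.negMulLog x - Real.negMulLog (x + v) ≤ Real.negMulLog v := by
  have key : Real.negMulLog x - Real.negMulLog (x + v) ≤ Real.negMulLog (1 - v) := by
    rcases eq_or_lt_of_le hv with h | hv0
    · simp [← h]
    set G : ℝ → ℝ := fun t => t * Real.log t with hG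
    have hconv : ConvexOn ℝ (Set.Ici (0:ℝ)) G := Real.convexOn_mul_log
    have hG1 : G 1 = 0 := by simp [hG]
    rcases eq_or_lt_of_le hxv with hcase | hcase
    · -- x + v = 1, so x = 1 - v
      have hx1 : x = 1 - v := by linarith
      rw [hcase, hx1]
      simp [Real.negMulLog]
    · -- x + v < 1
      have s1 : (G (x+v) - G x) / ((x+v) - x) ≤ (G 1 - G x) / (1 - x) :=
        hconv.secant_mono (Set.mem_Ici.mpr hx) (Set.mem_Ici.mpr (by linarith))
          (Set.mem_Ici.mpr (by norm_num)) (by intro h; nlinarith [hv0]) (by intro h; nlinarith)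
          (by linarith)
      have s2 : (G x - G 1) / (x - 1) ≤ (G (1-v) - G 1) / ((1-v) - 1) :=
        hconv.secant_mono (Set.mem_Ici.mpr (by norm_num : (0:ℝ) ≤ 1)) (Set.mem_Ici.mpr hx)
          (Set.mem_Ici.mpr (by linarith)) (by intro h; nlinarith) (by intro h; nlinarith)
          (by linarith)
      have e1 : (G (x+v) - G x) / ((x+v) - x) = (G (x+v) - G x) / v := by ring_nf
      have e2 : (G x - G 1) / (x - 1) = (G 1 - G x) / (1 - x) := by
        rw [← neg_div_neg_eq]; ring_nf
      have e3 : (G (1-v) - G 1) / ((1-v) - 1) = (G 1 - G (1-v)) / v := by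
        rw [← neg_div_neg_eq]; ring_nf
      rw [e1] at s1; rw [e2, e3] at s2
      have comb : (G (x+v) - G x) / v ≤ (G 1 - G (1-v)) / v := le_trans s1 s2
      have h4 := (div_le_div_iff_of_pos_right hv0).mp comb
      have h5 : (x+v) * Real.log (x+v) - x * Real.log x
          ≤ G 1 - (1-v) * Real.log (1-v) := h4
      rw [hG1] at h5
      simp only [Real.negMulLog, neg_mul]
      linarith
  exact le_trans key (nML_one_sub_le hv hv2)



/-- Fannes-type pointwise bound. -/
lemma abs_nML_sub {x y : ℝ} (hx0 : 0 ≤ x) (hy0 : 0 ≤ y) (hy1 : y ≤ 1) (hx1 : x ≤ 1)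
    (h : |x - y| ≤ 1/2) : |Real.negMulLog x - Real.negMulLog y| ≤ Real.negMulLog |x - y| := by
  rcases le_total x y with hxy | hxy
  · have hv : |x - y| = y - x := by rw [abs_sub_comm]; exact abs_of_nonneg (by linarith)
    rw [hv] at h ⊢
    have hy : y = x + (y - x) := by ring
    rw [abs_le]
    constructor
    · have := nML_add_le hx0 (by linarith : (0:ℝ) ≤ y - x)
      rw [← hy] at this; linarith
    · have := nML_sub_le hx0 (by linarith : (0:ℝ) ≤ y - x) h (by linarith)
      rw [← hy] at this; linarith
  · have hv : |x - y| = x - y := abs_of_nonneg (by linarith)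
    rw [hv] at h ⊢
    have hx : x = y + (x - y) := by ring
    rw [abs_le]
    constructor
    · have := nML_sub_le hy0 (by linarith : (0:ℝ) ≤ x - y) h (by linarith)
      rw [← hx] at this; linarith
    · have := nML_add_le hy0 (by linarith : (0:ℝ) ≤ x - y)
      rw [← hx] at this; linarith

/-- Jensen-type bound. -/
lemma sum_nML_le {α : Type*} [Fintype α] (t : α → ℝ) (ht : ∀ a, 0 ≤ t a) :
    ∑ a, Real.negMulLog (t a)
      ≤ Real.negMulLog (∑ a, t a) + (∑ a, t a) * Real.log (Fintype.card α) := by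
  rcases isEmpty_or_nonempty α with h | h
  · simp
  set m : ℝ := (Fintype.card α : ℝ) with hmdef
  have hm : (0:ℝ) < m := by
    simp only [hmdef]; exact_mod_cast Fintype.card_pos
  have key : ∀ a : α, (1/m) * Real.negMulLog (m * t a)
      = Real.negMulLog (t a) - t a * Real.log m := by
    intro a
    rw [Real.negMulLog_mul]
    simp only [Real.negMulLog]
    field_simp
    ring
  have hj := Real.concaveOn_negMulLog.le_map_sum (t := Finset.univ)
    (w := fun _ : α => 1/m) (p := fun a => m * t a)
    (fun i _ => div_nonneg zero_le_one hm.le)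
    (by rw [Finset.sum_const, Finset.card_univ]; rw [nsmul_eq_mul]; field_simp; exact hmdef.symm)
    (fun i _ => Set.mem_Ici.mpr (mul_nonneg hm.le (ht i)))
  simp only [smul_eq_mul] at hj
  rw [Finset.sum_congr rfl (fun a _ => key a)] at hj
  rw [Finset.sum_sub_distrib, ← Finset.sum_mul] at hj
  have harg : ∑ i, (1/m)*(m * t i) = ∑ i, t i :=
    Finset.sum_congr rfl fun a _ => by field_simp
  rw [harg] at hj
  linarith

noncomputable def entn {α : Type*} [Fintype α] (p : α → ℝ) : ℝ := ∑ a, Real.negMulLog (p a)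

lemma pmf_le_one {α : Type*} [Fintype α] {p : α → ℝ} (hp : IsPMF p) (a : α) : p a ≤ 1 := by
  have := Finset.single_le_sum (f := p) (fun i _ => hp.1 i) (Finset.mem_univ a)
  rw [hp.2] at this; exact this

lemma entn_nonneg {α : Type*} [Fintype α] {p : α → ℝ} (hp : IsPMF p) : 0 ≤ entn p :=
  Finset.sum_nonneg fun a _ => Real.negMulLog_nonneg (hp.1 a) (pmf_le_one hp a)

lemma entn_le {α : Type*} [Fintype α] {p : α → ℝ} (hp : IsPMF p) :
    entn p ≤ Real.log (Fintype.card α) := by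
  have := sum_nML_le p hp.1
  rw [hp.2] at this
  simpa [entn] using this

/-- Entropy continuity for PMFs. -/
lemma L1 {β : Type*} [Fintype β] {p q : β → ℝ} {ε : ℝ} (hp : IsPMF p) (hq : IsPMF q)
    (hε0 : 0 < ε) (hε1 : ε < 1) (h : ∑ y, |p y - q y| ≤ ε) :
    |entn p - entn q| ≤ 2*ε*Real.log (Fintype.card β) + 2 * Real.binEntropy ε := by
  have hne : Nonempty β := by
    by_contra hh
    rw [not_nonempty_iff] at hh
    have h2 := hp.2
    rw [Finset.univ_eq_empty, Finset.sum_empty] at h2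
    norm_num at h2
  have hcard : (1:ℝ) ≤ (Fintype.card β : ℝ) := by exact_mod_cast Fintype.card_pos
  have hlog0 : 0 ≤ Real.log (Fintype.card β) := Real.log_nonneg hcard
  have hbe0 : 0 ≤ Real.binEntropy ε := Real.binEntropy_nonneg hε0.le hε1.le
  rcases le_or_gt (1/2 : ℝ) ε with hhalf | hhalf
  · have h1 := entn_nonneg hp
    have h2 := entn_nonneg hq
    have h3 := entn_le hp
    have h4 := entn_le hq
    have b1 : |entn p - entn q| ≤ Real.log (Fintype.card β) := by
      rw [abs_le]; constructor <;> linarith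
    nlinarith
  · set θ := ∑ y, |p y - q y| with hθ
    have hθ0 : 0 ≤ θ := Finset.sum_nonneg (fun _ _ => abs_nonneg _)
    have hymax : ∀ y, |p y - q y| ≤ 1/2 := by
      intro y
      have h1 : |p y - q y| ≤ θ := by
        rw [hθ]
        exact Finset.single_le_sum (f := fun y => |p y - q y|)
          (fun i _ => abs_nonneg _) (Finset.mem_univ y)
      linarith
    have step1 : |entn p - entn q| ≤ ∑ y, |Real.negMulLog (p y) - Real.negMulLog (q y)| := by
      rw [entn, entn, ← Finset.sum_sub_distrib]
      exact Finset.abs_sum_le_sum_abs _ _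
    have step2 : ∑ y, |Real.negMulLog (p y) - Real.negMulLog (q y)|
        ≤ ∑ y, Real.negMulLog |p y - q y| :=
      Finset.sum_le_sum fun y _ => abs_nML_sub (hp.1 y) (hq.1 y) (pmf_le_one hq y)
        (pmf_le_one hp y) (hymax y)
    have step3 : ∑ y, Real.negMulLog |p y - q y|
        ≤ Real.negMulLog θ + θ * Real.log (Fintype.card β) :=
      sum_nML_le _ (fun _ => abs_nonneg _)
    have step4 : Real.negMulLog θ ≤ Real.binEntropy ε := by
      have m1 : Real.negMulLog θ ≤ Real.binEntropy θ := by
        rw [Real.binEntropy_eq_negMulLog_add_negMulLog_one_sub]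
        have := Real.negMulLog_nonneg (x := 1 - θ) (by linarith) (by linarith)
        linarith
      have m2 : Real.binEntropy θ ≤ Real.binEntropy ε :=
        Real.binEntropy_strictMonoOn.monotoneOn ⟨hθ0, by norm_num; linarith⟩
          ⟨hε0.le, by norm_num; linarith⟩ h
      linarith
    have step5 : θ * Real.log (Fintype.card β) ≤ ε * Real.log (Fintype.card β) :=
      mul_le_mul_of_nonneg_right h hlog0
    have hεlog : 0 ≤ ε * Real.log (Fintype.card β) := by positivity
    nlinarith


/-- Grouped-rows entropy continuity. -/
lemma L2 {B β : Type*} [Fintype B] [Fintype β] (P Q : B × β → ℝ) (w : B → ℝ) {ε : ℝ}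
    (hε0 : 0 < ε) (hε1 : ε < 1)
    (hP0 : ∀ t, 0 ≤ P t) (hQ0 : ∀ t, 0 ≤ Q t)
    (hPw : ∀ b, ∑ y, P (b,y) = w b) (hQw : ∀ b, ∑ y, Q (b,y) = w b)
    (hw1 : ∑ b, w b = 1)
    (hTV : ∀ b, ∑ y, |P (b,y) - Q (b,y)| ≤ ε * w b) :
    |entn P - entn Q| ≤ 2*ε*Real.log (Fintype.card β) + 2 * Real.binEntropy ε := by
  set δ := 2*ε*Real.log (Fintype.card β) + 2 * Real.binEntropy ε with hδ
  have hw0 : ∀ b, 0 ≤ w b := fun b => (hPw b) ▸ Finset.sum_nonneg (fun y _ => hP0 _)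
  have key : ∀ b : B,
      |∑ y, Real.negMulLog (P (b,y)) - ∑ y, Real.negMulLog (Q (b,y))| ≤ w b * δ := by
    intro b
    rcases eq_or_lt_of_le (hw0 b) with hb | hb
    · have hPz : ∀ y, P (b,y) = 0 := fun y =>
        (Finset.sum_eq_zero_iff_of_nonneg (fun y _ => hP0 (b,y))).mp
          (by rw [hPw b, ← hb]) y (Finset.mem_univ y)
      have hQz : ∀ y, Q (b,y) = 0 := fun y =>
        (Finset.sum_eq_zero_iff_of_nonneg (fun y _ => hQ0 (b,y))).mp
          (by rw [hQw b, ← hb]) y (Finset.mem_univ y)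
      simp [hPz, hQz, ← hb]
    · set pb : β → ℝ := fun y => P (b,y) / w b with hpbdef
      set qb : β → ℝ := fun y => Q (b,y) / w b with hqbdef
      have hpb : IsPMF pb := ⟨fun y => div_nonneg (hP0 _) (hw0 b),
        by rw [hpbdef]; rw [← Finset.sum_div, hPw b]; field_simp⟩
      have hqb : IsPMF qb := ⟨fun y => div_nonneg (hQ0 _) (hw0 b),
        by rw [hqbdef]; rw [← Finset.sum_div, hQw b]; field_simp⟩
      have htv : ∑ y, |pb y - qb y| ≤ ε := by
        have hy : ∀ y, |pb y - qb y| = |P (b,y) - Q (b,y)| / w b := by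
          intro y
          rw [hpbdef, hqbdef]
          rw [div_sub_div_same, abs_div, abs_of_pos hb]
        rw [Finset.sum_congr rfl (fun y _ => hy y), ← Finset.sum_div, div_le_iff₀ hb]
        calc ∑ y, |P (b,y) - Q (b,y)| ≤ ε * w b := hTV b
        _ = ε * w b := rfl
      have hL1 := L1 hpb hqb hε0 hε1 htv
      have hProw : ∑ y, Real.negMulLog (P (b,y))
          = w b * entn pb + Real.negMulLog (w b) := by
        have hy : ∀ y, Real.negMulLog (P (b,y))
            = w b * Real.negMulLog (pb y) + pb y * Real.negMulLog (w b) := by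
          intro y
          have hPy : P (b,y) = w b * pb y := by
            rw [hpbdef]; field_simp
          rw [hPy, Real.negMulLog_mul]; ring
        rw [Finset.sum_congr rfl (fun y _ => hy y), Finset.sum_add_distrib,
          ← Finset.mul_sum, ← Finset.sum_mul, hpb.2, one_mul]
        rfl
      have hQrow : ∑ y, Real.negMulLog (Q (b,y))
          = w b * entn qb + Real.negMulLog (w b) := by
        have hy : ∀ y, Real.negMulLog (Q (b,y))
            = w b * Real.negMulLog (qb y) + qb y * Real.negMulLog (w b) := by
          intro y
          have hQy : Q (b,y) = w b * qb y := by
            rw [hqbdef]; field_simp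
          rw [hQy, Real.negMulLog_mul]; ring
        rw [Finset.sum_congr rfl (fun y _ => hy y), Finset.sum_add_distrib,
          ← Finset.mul_sum, ← Finset.sum_mul, hqb.2, one_mul]
        rfl
      rw [hProw, hQrow]
      have heq : w b * entn pb + Real.negMulLog (w b)
          - (w b * entn qb + Real.negMulLog (w b)) = w b * (entn pb - entn qb) := by ring
      rw [heq, abs_mul, abs_of_pos hb]
      exact mul_le_mul_of_nonneg_left hL1 hb.le
  have htot : |entn P - entn Q| ≤ ∑ b, w b * δ := by
    rw [entn, entn, Fintype.sum_prod_type, Fintype.sum_prod_type, ← Finset.sum_sub_distrib]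
    exact le_trans (Finset.abs_sum_le_sum_abs _ _) (Finset.sum_le_sum fun b _ => key b)
  rw [← Finset.sum_mul, hw1, one_mul] at htot
  exact htot

lemma entn_comp_equiv {α β : Type*} [Fintype α] [Fintype β] (e : α ≃ β) (p : β → ℝ) :
    entn (fun a => p (e a)) = entn p :=
  Equiv.sum_comp e (fun b => Real.negMulLog (p b))

lemma prod_split {n : ℕ} (k : Fin n) (f : Fin n → ℝ) :
    ∏ i, f i = f k * ∏ j : {j : Fin n // j ≠ k}, f j.1 := by
  rw [← Finset.mul_prod_erase Finset.univ f (Finset.mem_univ k)]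
  congr 1
  exact Finset.prod_subtype (p := fun j => j ≠ k) (Finset.univ.erase k)
    (fun x => by simp [Finset.mem_erase]) (fun j => f j)

noncomputable def Pgen {A X β : Type*} [Fintype X] (n : ℕ) (K : Fin n → X → β → ℝ)
    (μ : A → (Fin n → X) → ℝ) : A × (Fin n → β) → ℝ :=
  fun t => ∑ x : Fin n → X, (∏ i, K i (x i) (t.2 i)) * μ t.1 x

lemma step_bound {A X β : Type*} [Fintype A] [Fintype X] [Fintype β] {n : ℕ} (k : Fin n)
    (K₁ K₂ : Fin n → X → β → ℝ) (μ : A → (Fin n → X) → ℝ) {ε : ℝ}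
    (hε0 : 0 < ε) (hε1 : ε < 1)
    (hK₁ : ∀ i x, IsPMF (K₁ i x)) (hK₂ : ∀ i x, IsPMF (K₂ i x))
    (hagree : ∀ i, i ≠ k → K₁ i = K₂ i)
    (hTV : ∀ x, ∑ y, |K₁ k x y - K₂ k x y| ≤ ε)
    (hμ0 : ∀ a x, 0 ≤ μ a x) (hμ1 : ∑ a, ∑ x, μ a x = 1) :
    |entn (Pgen n K₁ μ) - entn (Pgen n K₂ μ)|
      ≤ 2*ε*Real.log (Fintype.card β) + 2*Real.binEntropy ε := by
  classical
  set e : (Fin n → β) ≃ β × ({j : Fin n // j ≠ k} → β) := Equiv.funSplitAt k β with hedef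
  set c : A → ({j : Fin n // j ≠ k} → β) → (Fin n → X) → ℝ :=
    fun a r x => (∏ j : {j : Fin n // j ≠ k}, K₁ j.1 (x j.1) (r j)) * μ a x with hcdef
  have hc0 : ∀ a r x, 0 ≤ c a r x := fun a r x =>
    mul_nonneg (Finset.prod_nonneg fun j _ => (hK₁ j.1 (x j.1)).1 _) (hμ0 a x)
  set w : (A × ({j : Fin n // j ≠ k} → β)) → ℝ := fun b => ∑ x, c b.1 b.2 x with hwdef
  set P : (A × ({j : Fin n // j ≠ k} → β)) × β → ℝ :=
    fun t => ∑ x, K₁ k (x k) t.2 * c t.1.1 t.1.2 x with hPdef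
  set Q : (A × ({j : Fin n // j ≠ k} → β)) × β → ℝ :=
    fun t => ∑ x, K₂ k (x k) t.2 * c t.1.1 t.1.2 x with hQdef
  -- splitting the product
  have hsplit : ∀ (Kc : Fin n → X → β → ℝ),
      (∀ j : {j : Fin n // j ≠ k}, Kc j.1 = K₁ j.1) →
      ∀ (a : A) (r : {j : Fin n // j ≠ k} → β) (y : β) (x : Fin n → X),
      (∏ i, Kc i (x i) ((e.symm (y, r)) i)) * μ a x = Kc k (x k) y * c a r x := by
    intro Kc hoff a r y x
    rw [prod_split k]
    have h1 : (e.symm (y, r)) k = y := by simp [hedef]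
    have h2 : ∀ j : {j : Fin n // j ≠ k}, (e.symm (y, r)) j.1 = r j := by
      intro j
      simp only [hedef, Equiv.funSplitAt_symm_apply]
      rw [dif_neg j.2]
    rw [h1]
    rw [Finset.prod_congr rfl (fun j _ => by rw [h2 j, hoff j])]
    rw [hcdef]
    ring
  set E : ((A × ({j : Fin n // j ≠ k} → β)) × β) ≃ (A × (Fin n → β)) :=
    (Equiv.prodAssoc A _ β).trans ((Equiv.refl A).prodCongr
      ((Equiv.prodComm _ β).trans e.symm)) with hEdef
  have hfun₁ : (fun t => Pgen n K₁ μ (E t)) = P := by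
    funext t
    show (∑ x : Fin n → X, (∏ i, K₁ i (x i) ((e.symm (t.2, t.1.2)) i)) * μ t.1.1 x)
      = ∑ x : Fin n → X, K₁ k (x k) t.2 * c t.1.1 t.1.2 x
    exact Finset.sum_congr rfl fun x _ => hsplit K₁ (fun j => rfl) t.1.1 t.1.2 t.2 x
  have hfun₂ : (fun t => Pgen n K₂ μ (E t)) = Q := by
    funext t
    show (∑ x : Fin n → X, (∏ i, K₂ i (x i) ((e.symm (t.2, t.1.2)) i)) * μ t.1.1 x)
      = ∑ x : Fin n → X, K₂ k (x k) t.2 * c t.1.1 t.1.2 x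
    exact Finset.sum_congr rfl fun x _ =>
      hsplit K₂ (fun j => (hagree j.1 j.2).symm) t.1.1 t.1.2 t.2 x
  have hent₁ : entn (Pgen n K₁ μ) = entn P := by
    rw [← entn_comp_equiv E (Pgen n K₁ μ), hfun₁]
  have hent₂ : entn (Pgen n K₂ μ) = entn Q := by
    rw [← entn_comp_equiv E (Pgen n K₂ μ), hfun₂]
  rw [hent₁, hent₂]
  -- verify L2 hypotheses
  apply L2 P Q w hε0 hε1
  · intro t
    exact Finset.sum_nonneg fun x _ => mul_nonneg ((hK₁ k (x k)).1 _) (hc0 _ _ _)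
  · intro t
    exact Finset.sum_nonneg fun x _ => mul_nonneg ((hK₂ k (x k)).1 _) (hc0 _ _ _)
  · intro b
    show (∑ y, ∑ x, K₁ k (x k) y * c b.1 b.2 x) = ∑ x, c b.1 b.2 x
    rw [Finset.sum_comm]
    apply Finset.sum_congr rfl
    intro x _
    rw [← Finset.sum_mul, (hK₁ k (x k)).2, one_mul]
  · intro b
    show (∑ y, ∑ x, K₂ k (x k) y * c b.1 b.2 x) = ∑ x, c b.1 b.2 x
    rw [Finset.sum_comm]
    apply Finset.sum_congr rfl
    intro x _
    rw [← Finset.sum_mul, (hK₂ k (x k)).2, one_mul]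
  · show (∑ b : A × ({j : Fin n // j ≠ k} → β), ∑ x, c b.1 b.2 x) = 1
    rw [Fintype.sum_prod_type]
    have hr : ∀ (x : Fin n → X),
        ∑ r : {j : Fin n // j ≠ k} → β, (∏ j : {j : Fin n // j ≠ k}, K₁ j.1 (x j.1) (r j))
          = 1 := by
      intro x
      rw [← Fintype.piFinset_univ, ← Finset.prod_univ_sum]
      exact Finset.prod_eq_one fun j _ => (hK₁ j.1 (x j.1)).2
    have hstep : ∀ a : A,
        (∑ r : {j : Fin n // j ≠ k} → β, ∑ x, c a r x) = ∑ x, μ a x := by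
      intro a
      rw [Finset.sum_comm]
      apply Finset.sum_congr rfl
      intro x _
      show (∑ r : {j : Fin n // j ≠ k} → β,
        (∏ j : {j : Fin n // j ≠ k}, K₁ j.1 (x j.1) (r j)) * μ a x) = μ a x
      rw [← Finset.sum_mul, hr x, one_mul]
    calc (∑ a : A, ∑ r : {j : Fin n // j ≠ k} → β, ∑ x, c (a, r).1 (a, r).2 x)
        = ∑ a : A, ∑ x, μ a x := Finset.sum_congr rfl fun a _ => hstep a
      _ = 1 := hμ1
  · intro b
    have h1 : ∀ y, |P (b,y) - Q (b,y)|
        ≤ ∑ x, |K₁ k (x k) y - K₂ k (x k) y| * c b.1 b.2 x := by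
      intro y
      have hPQ : P (b,y) - Q (b,y)
          = ∑ x, (K₁ k (x k) y - K₂ k (x k) y) * c b.1 b.2 x := by
        show (∑ x, K₁ k (x k) y * c b.1 b.2 x) - (∑ x, K₂ k (x k) y * c b.1 b.2 x) = _
        rw [← Finset.sum_sub_distrib]
        exact Finset.sum_congr rfl fun x _ => by ring
      rw [hPQ]
      refine le_trans (Finset.abs_sum_le_sum_abs _ _) (Finset.sum_le_sum fun x _ => ?_)
      rw [abs_mul, abs_of_nonneg (hc0 _ _ _)]
    calc ∑ y, |P (b,y) - Q (b,y)|
        ≤ ∑ y, ∑ x, |K₁ k (x k) y - K₂ k (x k) y| * c b.1 b.2 x :=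
          Finset.sum_le_sum fun y _ => h1 y
      _ = ∑ x, (∑ y, |K₁ k (x k) y - K₂ k (x k) y|) * c b.1 b.2 x := by
          rw [Finset.sum_comm]
          exact Finset.sum_congr rfl fun x _ => by rw [Finset.sum_mul]
      _ ≤ ∑ x, ε * c b.1 b.2 x :=
          Finset.sum_le_sum fun x _ =>
            mul_le_mul_of_nonneg_right (hTV (x k)) (hc0 _ _ _)
      _ = ε * w b := by
          show (∑ x, ε * c b.1 b.2 x) = ε * ∑ x, c b.1 b.2 x
          rw [Finset.mul_sum]

/-- Telescoping over coordinates. -/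
lemma chan_bound {A X β : Type*} [Fintype A] [Fintype X] [Fintype β] (n : ℕ)
    (K K' : Fin n → X → β → ℝ) (μ : A → (Fin n → X) → ℝ) {ε : ℝ}
    (hε0 : 0 < ε) (hε1 : ε < 1)
    (hK : ∀ i x, IsPMF (K i x)) (hK' : ∀ i x, IsPMF (K' i x))
    (hTV : ∀ i x, ∑ y, |K i x y - K' i x y| ≤ ε)
    (hμ0 : ∀ a x, 0 ≤ μ a x) (hμ1 : ∑ a, ∑ x, μ a x = 1) :
    |entn (Pgen n K μ) - entn (Pgen n K' μ)|
      ≤ n * (2*ε*Real.log (Fintype.card β) + 2*Real.binEntropy ε) := by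
  classical
  set δ := 2*ε*Real.log (Fintype.card β) + 2*Real.binEntropy ε with hδ
  set hyb : Finset (Fin n) → (Fin n → X → β → ℝ) :=
    fun s i => if i ∈ s then K i else K' i with hhyb
  have hhybPMF : ∀ s i x, IsPMF (hyb s i x) := by
    intro s i x
    rw [hhyb]
    by_cases h : i ∈ s <;> simp [h] <;> [exact hK i x; exact hK' i x]
  have main : ∀ s : Finset (Fin n),
      |entn (Pgen n (hyb s) μ) - entn (Pgen n K' μ)| ≤ s.card * δ := by
    intro s
    induction s using Finset.induction_on with
    | empty =>
      have : hyb ∅ = K' := by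
        funext i; rw [hhyb]; simp
      rw [this]
      simp
    | @insert k s hk ih =>
      have hstep : |entn (Pgen n (hyb (insert k s)) μ) - entn (Pgen n (hyb s) μ)| ≤ δ := by
        apply step_bound k (hyb (insert k s)) (hyb s) μ hε0 hε1
          (hhybPMF _) (hhybPMF _)
        · intro i hik
          show (if i ∈ insert k s then K i else K' i) = (if i ∈ s then K i else K' i)
          by_cases h : i ∈ s
          · rw [if_pos h, if_pos (Finset.mem_insert_of_mem h)]
          · rw [if_neg h, if_neg (by simp [Finset.mem_insert, hik, h])]
        · intro x
          have h1 : hyb (insert k s) k = K k := by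
            rw [hhyb]; simp
          have h2 : hyb s k = K' k := by
            rw [hhyb]; simp [hk]
          rw [h1, h2]
          exact hTV k x
        · exact hμ0
        · exact hμ1
      have hcard : ((insert k s).card : ℝ) = s.card + 1 := by
        rw [Finset.card_insert_of_notMem hk]; push_cast; ring
      calc |entn (Pgen n (hyb (insert k s)) μ) - entn (Pgen n K' μ)|
          ≤ |entn (Pgen n (hyb (insert k s)) μ) - entn (Pgen n (hyb s) μ)|
            + |entn (Pgen n (hyb s) μ) - entn (Pgen n K' μ)| := abs_sub_le _ _ _
        _ ≤ δ + s.card * δ := add_le_add hstep ih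
        _ = (insert k s).card * δ := by rw [hcard]; ring
  have huniv := main Finset.univ
  have : hyb Finset.univ = K := by
    funext i; rw [hhyb]; simp
  rw [this] at huniv
  simpa using huniv



lemma entn_congr {α : Type*} [Fintype α] {p q : α → ℝ} (h : ∀ a, p a = q a) :
    entn p = entn q :=
  Finset.sum_congr rfl fun a _ => by rw [h a]

lemma ent_eq_entn {α : Type*} [Fintype α] (p : α → ℝ) : ent p = entn p / Real.log 2 := by
  unfold ent entn
  rw [Finset.sum_div, ← Finset.sum_neg_distrib]
  apply Finset.sum_congr rfl
  intro a _
  simp only [Real.negMulLog_def, Real.logb]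
  ring

lemma H2_eq_binEntropy (e : ℝ) : H2 e = Real.binEntropy e / Real.log 2 := by
  unfold H2 Real.binEntropy
  rcases eq_or_ne e 0 with h | h0
  · simp [h, Real.logb]
  rcases eq_or_ne (1 - e) 0 with h | h1
  · simp [h, Real.logb, show e = 1 by linarith]
  rw [Real.log_inv, Real.log_inv, Real.logb, Real.logb]
  ring

/-- Continuity of `condMI ∘ PUVOut` in the channel. -/
lemma condMI_close {Xt β U V : Type*} [Fintype Xt] [Fintype β] [Fintype U] [Fintype V]
    {n : ℕ} (Ch Ch' : Xt → β → ℝ) {ε : ℝ} (hε0 : 0 < ε) (hε1 : ε < 1)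
    (hCh : ∀ x, IsPMF (Ch x)) (hCh' : ∀ x, IsPMF (Ch' x))
    (hTV : ∀ x, ∑ y, |Ch x y - Ch' x y| ≤ ε)
    (PU : U → ℝ) (PVU : U → V → ℝ) (E : V → (Fin n → Xt) → ℝ)
    (hPU : IsPMF PU) (hPVU : ∀ u, IsPMF (PVU u)) (hE : ∀ v, IsPMF (E v)) :
    |condMI (PUVOut n Ch PU PVU E) - condMI (PUVOut n Ch' PU PVU E)|
      ≤ n * (4*ε*Real.logb 2 (Fintype.card β) + 4 * H2 ε) := by
  classical
  -- marginals over the output are channel-independent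
  have hmargUV : ∀ (C : Xt → β → ℝ), (∀ x, IsPMF (C x)) → ∀ u v,
      (∑ c : Fin n → β, PUVOut n C PU PVU E (u, v, c)) = PVU u v * PU u := by
    intro C hC u v
    show (∑ c : Fin n → β, ∑ x, (∏ i, C (x i) (c i)) * E v x * PVU u v * PU u)
      = PVU u v * PU u
    rw [Finset.sum_comm]
    have hx : ∀ x : Fin n → Xt,
        (∑ c : Fin n → β, (∏ i, C (x i) (c i)) * E v x * PVU u v * PU u)
          = E v x * (PVU u v * PU u) := by
      intro x
      have hsum : (∑ c : Fin n → β, ∏ i, C (x i) (c i)) = 1 := by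
        rw [← Fintype.piFinset_univ, ← Finset.prod_univ_sum]
        exact Finset.prod_eq_one fun i _ => (hC (x i)).2
      calc (∑ c : Fin n → β, (∏ i, C (x i) (c i)) * E v x * PVU u v * PU u)
          = (∑ c : Fin n → β, ∏ i, C (x i) (c i)) * (E v x * (PVU u v * PU u)) := by
            rw [Finset.sum_mul]
            exact Finset.sum_congr rfl fun cc _ => by ring
        _ = E v x * (PVU u v * PU u) := by rw [hsum, one_mul]
    rw [Finset.sum_congr rfl fun x _ => hx x, ← Finset.sum_mul, (hE v).2, one_mul]
  have hmargU : ∀ (C : Xt → β → ℝ), (∀ x, IsPMF (C x)) → ∀ u,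
      (∑ v, ∑ c : Fin n → β, PUVOut n C PU PVU E (u, v, c)) = PU u := by
    intro C hC u
    rw [Finset.sum_congr rfl fun v _ => hmargUV C hC u v, ← Finset.sum_mul, (hPVU u).2, one_mul]
  -- the U-marginal joint distribution as a Pgen
  set μU : U → (Fin n → Xt) → ℝ := fun u x => ∑ v, E v x * PVU u v * PU u with hμU
  have hA2 : ∀ (C : Xt → β → ℝ) (t : U × (Fin n → β)),
      (∑ v, PUVOut n C PU PVU E (t.1, v, t.2)) = Pgen n (fun _ => C) μU t := by
    intro C t
    show (∑ v, ∑ x, (∏ i, C (x i) (t.2 i)) * E v x * PVU t.1 v * PU t.1)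
      = ∑ x, (∏ i, C (x i) (t.2 i)) * (∑ v, E v x * PVU t.1 v * PU t.1)
    rw [Finset.sum_comm]
    apply Finset.sum_congr rfl
    intro x _
    rw [Finset.mul_sum]
    exact Finset.sum_congr rfl fun v _ => by ring
  have hμU0 : ∀ u x, 0 ≤ μU u x := fun u x =>
    Finset.sum_nonneg fun v _ =>
      mul_nonneg (mul_nonneg ((hE v).1 x) ((hPVU u).1 v)) (hPU.1 u)
  have hμU1 : ∑ u, ∑ x, μU u x = 1 := by
    have hu : ∀ u, (∑ x, μU u x) = PU u := by
      intro u
      show (∑ x, ∑ v, E v x * PVU u v * PU u) = PU u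
      rw [Finset.sum_comm]
      have hv : ∀ v, (∑ x, E v x * PVU u v * PU u) = PVU u v * PU u := by
        intro v
        rw [← Finset.sum_mul, ← Finset.sum_mul, (hE v).2, one_mul]
      rw [Finset.sum_congr rfl fun v _ => hv v, ← Finset.sum_mul, (hPVU u).2, one_mul]
    rw [Finset.sum_congr rfl fun u _ => hu u, hPU.2]
  -- the full joint distribution as a Pgen
  set μA : (U × V) → (Fin n → Xt) → ℝ := fun p x => E p.2 x * PVU p.1 p.2 * PU p.1 with hμA
  have hA3 : ∀ (C : Xt → β → ℝ),
      entn (PUVOut n C PU PVU E) = entn (Pgen n (fun _ => C) μA) := by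
    intro C
    rw [← entn_comp_equiv (Equiv.prodAssoc U V (Fin n → β)) (PUVOut n C PU PVU E)]
    apply entn_congr
    intro t
    show (∑ x, (∏ i, C (x i) (t.2 i)) * E t.1.2 x * PVU t.1.1 t.1.2 * PU t.1.1)
      = ∑ x, (∏ i, C (x i) (t.2 i)) * (E t.1.2 x * PVU t.1.1 t.1.2 * PU t.1.1)
    exact Finset.sum_congr rfl fun x _ => by ring
  have hμA0 : ∀ p x, 0 ≤ μA p x := fun p x =>
    mul_nonneg (mul_nonneg ((hE p.2).1 x) ((hPVU p.1).1 p.2)) (hPU.1 p.1)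
  have hμA1 : ∑ p : U × V, ∑ x, μA p x = 1 := by
    rw [Fintype.sum_prod_type]
    have hu : ∀ u, (∑ v, ∑ x, μA (u, v) x) = PU u := by
      intro u
      have hv : ∀ v, (∑ x, E v x * PVU u v * PU u) = PVU u v * PU u := by
        intro v
        rw [← Finset.sum_mul, ← Finset.sum_mul, (hE v).2, one_mul]
      calc (∑ v, ∑ x, μA (u, v) x) = ∑ v, PVU u v * PU u :=
            Finset.sum_congr rfl fun v _ => hv v
        _ = PU u := by rw [← Finset.sum_mul, (hPVU u).2, one_mul]
    rw [Finset.sum_congr rfl fun u _ => hu u, hPU.2]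
  -- channel family bounds
  have hKfam : ∀ i x, IsPMF ((fun _ : Fin n => Ch) i x) := fun _ x => hCh x
  have hKfam' : ∀ i x, IsPMF ((fun _ : Fin n => Ch') i x) := fun _ x => hCh' x
  have hTVfam : ∀ (i : Fin n) x, ∑ y, |Ch x y - Ch' x y| ≤ ε := fun _ x => hTV x
  have hb2 := chan_bound n (fun _ => Ch) (fun _ => Ch') μU hε0 hε1 hKfam hKfam' hTVfam hμU0 hμU1
  have hb3 := chan_bound n (fun _ => Ch) (fun _ => Ch') μA hε0 hε1 hKfam hKfam' hTVfam hμA0 hμA1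
  -- decompose condMI difference
  have e1 : (fun x : U × V => ∑ c, PUVOut n Ch PU PVU E (x.1, x.2, c))
      = (fun x : U × V => ∑ c, PUVOut n Ch' PU PVU E (x.1, x.2, c)) := by
    funext x
    rw [hmargUV Ch hCh x.1 x.2, hmargUV Ch' hCh' x.1 x.2]
  have e4 : (fun a => ∑ b, ∑ c, PUVOut n Ch PU PVU E (a, b, c))
      = (fun a => ∑ b, ∑ c, PUVOut n Ch' PU PVU E (a, b, c)) := by
    funext a
    rw [hmargU Ch hCh a, hmargU Ch' hCh' a]
  have hdecomp : condMI (PUVOut n Ch PU PVU E) - condMI (PUVOut n Ch' PU PVU E)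
      = (ent (fun x : U × (Fin n → β) => ∑ b, PUVOut n Ch PU PVU E (x.1, b, x.2))
          - ent (fun x : U × (Fin n → β) => ∑ b, PUVOut n Ch' PU PVU E (x.1, b, x.2)))
        - (ent (PUVOut n Ch PU PVU E) - ent (PUVOut n Ch' PU PVU E)) := by
    unfold condMI
    rw [e1, e4]
    ring
  have hlog2 : (0:ℝ) < Real.log 2 := Real.log_pos (by norm_num)
  -- bound term 2
  have hent2 : |ent (fun x : U × (Fin n → β) => ∑ b, PUVOut n Ch PU PVU E (x.1, b, x.2))
      - ent (fun x : U × (Fin n → β) => ∑ b, PUVOut n Ch' PU PVU E (x.1, b, x.2))|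
      ≤ n * (2*ε*Real.log (Fintype.card β) + 2*Real.binEntropy ε) / Real.log 2 := by
    rw [ent_eq_entn, ent_eq_entn,
      entn_congr (fun t => hA2 Ch t), entn_congr (fun t => hA2 Ch' t),
      div_sub_div_same, abs_div, abs_of_pos hlog2, div_le_div_iff_of_pos_right hlog2]
    exact hb2
  have hent3 : |ent (PUVOut n Ch PU PVU E) - ent (PUVOut n Ch' PU PVU E)|
      ≤ n * (2*ε*Real.log (Fintype.card β) + 2*Real.binEntropy ε) / Real.log 2 := by
    rw [ent_eq_entn, ent_eq_entn, hA3 Ch, hA3 Ch',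
      div_sub_div_same, abs_div, abs_of_pos hlog2, div_le_div_iff_of_pos_right hlog2]
    exact hb3
  have hfinal : (2:ℝ) * (n * (2*ε*Real.log (Fintype.card β) + 2*Real.binEntropy ε) / Real.log 2)
      = n * (4*ε*Real.logb 2 (Fintype.card β) + 4 * H2 ε) := by
    rw [H2_eq_binEntropy, Real.logb]
    field_simp
    ring
  calc |condMI (PUVOut n Ch PU PVU E) - condMI (PUVOut n Ch' PU PVU E)|
      ≤ |ent (fun x : U × (Fin n → β) => ∑ b, PUVOut n Ch PU PVU E (x.1, b, x.2))
          - ent (fun x : U × (Fin n → β) => ∑ b, PUVOut n Ch' PU PVU E (x.1, b, x.2))|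
        + |ent (PUVOut n Ch PU PVU E) - ent (PUVOut n Ch' PU PVU E)| := by
        rw [hdecomp]; exact abs_sub _ _
    _ ≤ n * (2*ε*Real.log (Fintype.card β) + 2*Real.binEntropy ε) / Real.log 2
        + n * (2*ε*Real.log (Fintype.card β) + 2*Real.binEntropy ε) / Real.log 2 :=
        add_le_add hent2 hent3
    _ = n * (4*ε*Real.logb 2 (Fintype.card β) + 4 * H2 ε) := by rw [← hfinal]; ring

/-- closeness of infima. -/
lemma abs_iInf_sub_iInf {S T : Type*} [Fintype S] [Fintype T] [Nonempty S] [Nonempty T]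
    (f : S → ℝ) (g : T → ℝ) {c : ℝ}
    (h1 : ∀ t, ∃ s, |f s - g t| ≤ c) (h2 : ∀ s, ∃ t, |f s - g t| ≤ c) :
    |(⨅ s, f s) - (⨅ t, g t)| ≤ c := by
  have hbf : BddBelow (Set.range f) := (Set.finite_range f).bddBelow
  have hbg : BddBelow (Set.range g) := (Set.finite_range g).bddBelow
  rw [abs_le]
  constructor
  · obtain ⟨s₀, hs₀⟩ := Finite.exists_min f
    have hinf : (⨅ s, f s) = f s₀ := le_antisymm (ciInf_le hbf s₀) (le_ciInf hs₀)
    obtain ⟨t₁, ht₁⟩ := h2 s₀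
    have h3 : (⨅ t, g t) ≤ g t₁ := ciInf_le hbg t₁
    have h4 := abs_le.mp ht₁
    rw [hinf]
    linarith [h4.1]
  · obtain ⟨t₀, ht₀⟩ := Finite.exists_min g
    have hinf : (⨅ t, g t) = g t₀ := le_antisymm (ciInf_le hbg t₀) (le_ciInf ht₀)
    obtain ⟨s₁, hs₁⟩ := h1 t₀
    have h3 : (⨅ s, f s) ≤ f s₁ := ciInf_le hbf s₁
    have h4 := abs_le.mp hs₁
    rw [hinf]
    linarith [h4.2]

/-- closeness of suprema. -/
lemma abs_iSup_sub_iSup {S T : Type*} [Fintype S] [Fintype T] [Nonempty S] [Nonempty T]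
    (f : S → ℝ) (g : T → ℝ) {c : ℝ}
    (h1 : ∀ t, ∃ s, |f s - g t| ≤ c) (h2 : ∀ s, ∃ t, |f s - g t| ≤ c) :
    |(⨆ s, f s) - (⨆ t, g t)| ≤ c := by
  have hbf : BddAbove (Set.range f) := (Set.finite_range f).bddAbove
  have hbg : BddAbove (Set.range g) := (Set.finite_range g).bddAbove
  rw [abs_le]
  constructor
  · obtain ⟨t₀, ht₀⟩ := Finite.exists_max g
    have hsup : (⨆ t, g t) = g t₀ := le_antisymm (ciSup_le ht₀) (le_ciSup hbg t₀)
    obtain ⟨s₁, hs₁⟩ := h1 t₀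
    have h3 : f s₁ ≤ (⨆ s, f s) := le_ciSup hbf s₁
    have h4 := abs_le.mp hs₁
    rw [hsup]
    linarith [h4.1]
  · obtain ⟨s₀, hs₀⟩ := Finite.exists_max f
    have hsup : (⨆ s, f s) = f s₀ := le_antisymm (ciSup_le hs₀) (le_ciSup hbf s₀)
    obtain ⟨t₁, ht₁⟩ := h2 s₀
    have h3 : g t₁ ≤ (⨆ t, g t) := le_ciSup hbg t₁
    have h4 := abs_le.mp ht₁
    rw [hsup]
    linarith [h4.2]


end BCC

/-- continuity of the maximum achievable confidential-message rate of
the compound BCC.  The hypotheses `hDW1, hDW2, hDV1, hDV2` express `D(𝔚₁,𝔚₂) ≤ ε`. -/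
theorem confidential_rate_continuity
    {X Y Z S1 S2 U V : Type*}
    [Fintype X] [Fintype Y] [Fintype Z] [Fintype S1] [Fintype S2] [Fintype U] [Fintype V]
    [Nonempty X] [Nonempty Y] [Nonempty Z] [Nonempty S1] [Nonempty S2] [Nonempty U] [Nonempty V]
    (ε : ℝ) (hε : ε ∈ Set.Ioo (0 : ℝ) 1)
    (W1 : S1 → X → Y → ℝ) (V1 : S1 → X → Z → ℝ)
    (W2 : S2 → X → Y → ℝ) (V2 : S2 → X → Z → ℝ)
    (hW1 : ∀ s x, IsPMF (W1 s x)) (hV1 : ∀ s x, IsPMF (V1 s x))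
    (hW2 : ∀ s x, IsPMF (W2 s x)) (hV2 : ∀ s x, IsPMF (V2 s x))
    (hDW1 : ∀ s2, ∃ s1, ∀ x, ∑ y, |W1 s1 x y - W2 s2 x y| ≤ ε)
    (hDW2 : ∀ s1, ∃ s2, ∀ x, ∑ y, |W1 s1 x y - W2 s2 x y| ≤ ε)
    (hDV1 : ∀ s2, ∃ s1, ∀ x, ∑ z, |V1 s1 x z - V2 s2 x z| ≤ ε)
    (hDV2 : ∀ s1, ∃ s2, ∀ x, ∑ z, |V1 s1 x z - V2 s2 x z| ≤ ε)
    (n : ℕ) (hn : 1 ≤ n)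
    (PU : U → ℝ) (PVU : U → V → ℝ) (E : V → (Fin n → X) → ℝ)
    (hPU : IsPMF PU) (hPVU : ∀ u, IsPMF (PVU u)) (hE : ∀ v, IsPMF (E v)) :
    |(1 / n : ℝ) * ((⨅ s : S1, condMI (PUVOut n (W1 s) PU PVU E))
        - ⨆ s : S1, condMI (PUVOut n (V1 s) PU PVU E))
      - (1 / n : ℝ) * ((⨅ s : S2, condMI (PUVOut n (W2 s) PU PVU E))
        - ⨆ s : S2, condMI (PUVOut n (V2 s) PU PVU E))|
      ≤ 4 * ε * Real.logb 2 ((Fintype.card Y : ℝ) * (Fintype.card Z : ℝ)) + 8 * H2 ε := by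
  obtain ⟨hε0, hε1⟩ := hε
  have hn0 : (0:ℝ) < (n:ℝ) := by exact_mod_cast Nat.lt_of_lt_of_le Nat.zero_lt_one hn
  set δY := 4*ε*Real.logb 2 ((Fintype.card Y : ℝ)) + 4 * H2 ε with hδY
  set δZ := 4*ε*Real.logb 2 ((Fintype.card Z : ℝ)) + 4 * H2 ε with hδZ
  have hWpair : ∀ (s1 : S1) (s2 : S2), (∀ x, ∑ y, |W1 s1 x y - W2 s2 x y| ≤ ε) →
      |condMI (PUVOut n (W1 s1) PU PVU E) - condMI (PUVOut n (W2 s2) PU PVU E)|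
        ≤ n * δY := fun s1 s2 h =>
    BCC.condMI_close (W1 s1) (W2 s2) hε0 hε1 (hW1 s1) (hW2 s2) h PU PVU E hPU hPVU hE
  have hVpair : ∀ (s1 : S1) (s2 : S2), (∀ x, ∑ z, |V1 s1 x z - V2 s2 x z| ≤ ε) →
      |condMI (PUVOut n (V1 s1) PU PVU E) - condMI (PUVOut n (V2 s2) PU PVU E)|
        ≤ n * δZ := fun s1 s2 h =>
    BCC.condMI_close (V1 s1) (V2 s2) hε0 hε1 (hV1 s1) (hV2 s2) h PU PVU E hPU hPVU hE
  have hIW : |(⨅ s : S1, condMI (PUVOut n (W1 s) PU PVU E))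
      - ⨅ s : S2, condMI (PUVOut n (W2 s) PU PVU E)| ≤ n * δY :=
    BCC.abs_iInf_sub_iInf _ _
      (fun t => (hDW1 t).imp (fun s hs => hWpair s t hs))
      (fun s => (hDW2 s).imp (fun t ht => hWpair s t ht))
  have hJV : |(⨆ s : S1, condMI (PUVOut n (V1 s) PU PVU E))
      - ⨆ s : S2, condMI (PUVOut n (V2 s) PU PVU E)| ≤ n * δZ :=
    BCC.abs_iSup_sub_iSup _ _
      (fun t => (hDV1 t).imp (fun s hs => hVpair s t hs))
      (fun s => (hDV2 s).imp (fun t ht => hVpair s t ht))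
  rw [← mul_sub]
  rw [abs_mul, abs_of_nonneg (by positivity : (0:ℝ) ≤ 1/(n:ℝ))]
  have habs : |((⨅ s : S1, condMI (PUVOut n (W1 s) PU PVU E))
        - ⨆ s : S1, condMI (PUVOut n (V1 s) PU PVU E))
      - ((⨅ s : S2, condMI (PUVOut n (W2 s) PU PVU E))
        - ⨆ s : S2, condMI (PUVOut n (V2 s) PU PVU E))| ≤ n * δY + n * δZ := by
    have hrw : ((⨅ s : S1, condMI (PUVOut n (W1 s) PU PVU E))
        - ⨆ s : S1, condMI (PUVOut n (V1 s) PU PVU E))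
      - ((⨅ s : S2, condMI (PUVOut n (W2 s) PU PVU E))
        - ⨆ s : S2, condMI (PUVOut n (V2 s) PU PVU E))
      = ((⨅ s : S1, condMI (PUVOut n (W1 s) PU PVU E))
          - ⨅ s : S2, condMI (PUVOut n (W2 s) PU PVU E))
        - ((⨆ s : S1, condMI (PUVOut n (V1 s) PU PVU E))
          - ⨆ s : S2, condMI (PUVOut n (V2 s) PU PVU E)) := by ring
    rw [hrw]
    exact le_trans (abs_sub _ _) (add_le_add hIW hJV)
  have hYne : ((Fintype.card Y : ℝ)) ≠ 0 := by
    have : 0 < Fintype.card Y := Fintype.card_pos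
    positivity
  have hZne : ((Fintype.card Z : ℝ)) ≠ 0 := by
    have : 0 < Fintype.card Z := Fintype.card_pos
    positivity
  calc (1/(n:ℝ)) * |((⨅ s : S1, condMI (PUVOut n (W1 s) PU PVU E))
        - ⨆ s : S1, condMI (PUVOut n (V1 s) PU PVU E))
      - ((⨅ s : S2, condMI (PUVOut n (W2 s) PU PVU E))
        - ⨆ s : S2, condMI (PUVOut n (V2 s) PU PVU E))|
      ≤ (1/(n:ℝ)) * (n * δY + n * δZ) :=
        mul_le_mul_of_nonneg_left habs (by positivity)
    _ = δY + δZ := by field_simp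
    _ = 4 * ε * Real.logb 2 ((Fintype.card Y : ℝ) * (Fintype.card Z : ℝ)) + 8 * H2 ε := by
        rw [Real.logb_mul hYne hZne, hδY, hδZ]
        ring
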